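/- Let R be a unital associative ring and let J = J₂ ∘ J₁ act on 2×2 matrices over R. Then dom(J) = dom(J⁻¹) = M₂*(R) ∩ M₂⋆(R), and a matrix A = [[a,b],[c,d]] belongs to this common domain if and only if a, b, c, d and db⁻¹ − ca⁻¹ are invertible in R. J maps dom(J) bijectively onto itself and is given there by the formula J(A) = [[a − bd⁻¹c, b − ac⁻¹d], [c − db⁻¹a, d − ca⁻¹b]]. Furthermore, J(A) ∼ J⁻¹(A) for every A ∈ dom(J); consequently J²(A) ∼ A for every A ∈ dom(J). -/

import Mathlib

open Matrix

section KontsevichDefs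

variable {R : Type*} [Ring R]

/-- `J₂`: the transposed Hadamard inverse, `J₂(M)_{jk} = (M_{kj})⁻¹`
(with `Ring.inverse`, which is the two-sided inverse on units and `0` elsewhere). -/
noncomputable def J2 {m : Type*} (M : Matrix m m R) : Matrix m m R :=
  Matrix.of fun j k => Ring.inverse (M k j)

variable {m : Type*} [Fintype m] [DecidableEq m]

/-- `J = J₂ ∘ J₁`, where `J₁(M) = M⁻¹` is the usual matrix inverse. -/
noncomputable def Jmap (M : Matrix m m R) : Matrix m m R := J2 (Ring.inverse M)

/-- `J⁻¹ = J₁ ∘ J₂`. -/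
noncomputable def JinvMap (M : Matrix m m R) : Matrix m m R := Ring.inverse (J2 M)

/-- `dom(J)`: `M` invertible and all entries of `M⁻¹` invertible. -/
def domJ (M : Matrix m m R) : Prop :=
  IsUnit M ∧ ∀ j k, IsUnit (Ring.inverse M j k)

/-- `dom(J⁻¹)`: all entries of `M` invertible and `J₂(M)` invertible. -/
def domJinv (M : Matrix m m R) : Prop :=
  (∀ j k, IsUnit (M j k)) ∧ IsUnit (J2 M)

/-- `dom(Jⁿ)` defined recursively: `M ∈ dom(Jⁿ⁺¹)` iff `M ∈ dom(J)` and `J(M) ∈ dom(Jⁿ)`. -/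
def domJpow : ℕ → Matrix m m R → Prop
  | 0, _ => True
  | n + 1, M => domJ M ∧ domJpow n (Jmap M)

/-- `A ∼ B`: `B = D₁⁻¹ A D₂` for diagonal matrices `D₁, D₂` with invertible diagonal entries. -/
def simRel (A B : Matrix m m R) : Prop :=
  ∃ d₁ d₂ : m → Rˣ,
    B = Matrix.diagonal (fun i => (((d₁ i)⁻¹ : Rˣ) : R)) * A *
        Matrix.diagonal (fun i => ((d₂ i : Rˣ) : R))

/-- entrywise conjugation `x⁻¹ A x` by an invertible ring element. -/
def conjEntry {m' : Type*} (x : Rˣ) (A : Matrix m' m' R) : Matrix m' m' R :=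
  Matrix.of fun j k => ((x⁻¹ : Rˣ) : R) * A j k * (x : R)

/-- `M̂ₙ(R)`: first row and first column consist entirely of `1`'s. -/
def Mhat {m' : Type*} [Zero m'] (A : Matrix m' m' R) : Prop :=
  ∀ k, A 0 k = 1 ∧ A k 0 = 1

/-- `Λ^L(A)_{jk} = a₁₁ a_{j1}⁻¹ a_{jk} a_{1k}⁻¹`. -/
noncomputable def LamL {m' : Type*} [Zero m'] (A : Matrix m' m' R) : Matrix m' m' R :=
  Matrix.of fun j k => A 0 0 * Ring.inverse (A j 0) * A j k * Ring.inverse (A 0 k)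

/-- `Λ^R(A)_{jk} = a_{j1}⁻¹ a_{jk} a_{1k}⁻¹ a₁₁`. -/
noncomputable def LamR {m' : Type*} [Zero m'] (A : Matrix m' m' R) : Matrix m' m' R :=
  Matrix.of fun j k => Ring.inverse (A j 0) * A j k * Ring.inverse (A 0 k) * A 0 0

/-- `Φ(A) = J₂(Λ^L(A⁻¹))`. -/
noncomputable def Phi [Zero m] (A : Matrix m m R) : Matrix m m R := J2 (LamL (Ring.inverse A))

/-- `dom(Φ)`: `A ∈ M̂ₙ(R)`, all entries of `A` invertible, `A` invertible,
all entries of `A⁻¹` invertible. -/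
def domPhi [Zero m] (A : Matrix m m R) : Prop :=
  Mhat A ∧ (∀ j k, IsUnit (A j k)) ∧ IsUnit A ∧ ∀ j k, IsUnit (Ring.inverse A j k)

/-- `Φ⁻¹(B) = Λ^R(J⁻¹(B)) = Λ^R((J₂ B)⁻¹)`. -/
noncomputable def PhiInv [Zero m] (B : Matrix m m R) : Matrix m m R := LamR (Ring.inverse (J2 B))

/-- `dom(Φ⁻¹)`: `B ∈ M̂ₙ(R)`, all entries of `B` invertible, `J₂(B)` invertible,
all entries of `J₂(B)⁻¹` invertible. -/
def domPhiInv [Zero m] (B : Matrix m m R) : Prop :=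
  Mhat B ∧ (∀ j k, IsUnit (B j k)) ∧ IsUnit (J2 B) ∧ ∀ j k, IsUnit (Ring.inverse (J2 B) j k)

/-- `dom(Φⁿ)` defined recursively. -/
def domPhipow [Zero m] : ℕ → Matrix m m R → Prop
  | 0, _ => True
  | n + 1, A => domPhi A ∧ domPhipow n (Phi A)

/-- `Ψ = J₂ ∘ Φ ∘ J₂`. -/
noncomputable def Psi [Zero m] (A : Matrix m m R) : Matrix m m R := J2 (Phi (J2 A))

/-- `dom(Ψ)`: `A ∈ M̂ₙ(R)`, all entries of `A` invertible, `J₂(A) ∈ dom(Φ)`. -/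
def domPsi [Zero m] (A : Matrix m m R) : Prop :=
  Mhat A ∧ (∀ j k, IsUnit (A j k)) ∧ domPhi (J2 A)

/-- every square submatrix (equinumerous injective choices of rows and columns) is invertible. -/
def allSquareSubInv (M : Matrix (Fin 3) (Fin 3) R) : Prop :=
  ∀ (k : ℕ) (r c : Fin k → Fin 3), Function.Injective r → Function.Injective c →
    IsUnit (M.submatrix r c)

/-- only the `1×1` and `2×2` submatrices are required to be invertible. -/
def sub12Inv (M : Matrix (Fin 3) (Fin 3) R) : Prop :=
  (∀ j k, IsUnit (M j k)) ∧
  ∀ (r c : Fin 2 → Fin 3), Function.Injective r → Function.Injective c →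
    IsUnit (M.submatrix r c)

/-- `S`: all square submatrices of `M` are invertible and `J₂(M)` is invertible. -/
def Sset (R : Type*) [Ring R] : Set (Matrix (Fin 3) (Fin 3) R) :=
  {M | allSquareSubInv M ∧ IsUnit (J2 M)}

/-- `Ŝ = S ∩ M̂₃(R)`. -/
def Shat (R : Type*) [Ring R] : Set (Matrix (Fin 3) (Fin 3) R) :=
  {M | M ∈ Sset R ∧ Mhat M}

end KontsevichDefs

section Aux
variable {R : Type*} [Ring R]
set_option maxHeartbeats 1000000

noncomputable def Ninv (a b c d u : Rˣ) : Matrix (Fin 2) (Fin 2) R :=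
  !![↑(a⁻¹*u⁻¹*d*b⁻¹), -↑(a⁻¹*u⁻¹); -↑(b⁻¹*u⁻¹*c*a⁻¹), ↑(b⁻¹*u⁻¹)]

lemma key_mul {a b c d u : Rˣ} (hu : (u:R) = ↑d*↑b⁻¹ - ↑c*↑a⁻¹) :
    !![(a:R),b;c,d] * Ninv a b c d u = 1 ∧ Ninv a b c d u * !![(a:R),b;c,d] = 1 := by
  have hc : (↑c : R) = (↑d*↑b⁻¹ - ↑u)*↑a := by
    rw [hu, sub_sub_cancel, Units.inv_mul_cancel_right]
  constructor <;>
  · simp only [Ninv, Matrix.mul_fin_two, Matrix.one_fin_two, Units.val_mul, hc]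
    simp only [mul_sub, sub_mul, mul_neg, neg_mul, mul_assoc, Units.mul_inv_cancel_left,
      Units.inv_mul_cancel_left, one_mul, mul_one, Units.mul_inv, Units.inv_mul]
    ext i j
    fin_cases i <;> fin_cases j <;> simp

noncomputable def keyUnit (a b c d u : Rˣ) (hu : (u:R) = ↑d*↑b⁻¹ - ↑c*↑a⁻¹) :
    (Matrix (Fin 2) (Fin 2) R)ˣ :=
  ⟨!![(a:R),b;c,d], Ninv a b c d u, (key_mul hu).1, (key_mul hu).2⟩

lemma isUnit_key {a b c d u : Rˣ} (hu : (u:R) = ↑d*↑b⁻¹ - ↑c*↑a⁻¹) :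
    IsUnit (!![(a:R),b;c,d]) := ⟨keyUnit a b c d u hu, rfl⟩

lemma ringInverse_key {a b c d u : Rˣ} (hu : (u:R) = ↑d*↑b⁻¹ - ↑c*↑a⁻¹) :
    Ring.inverse (!![(a:R),b;c,d]) = Ninv a b c d u :=
  Ring.inverse_unit (keyUnit a b c d u hu)

lemma isUnit_u_of_isUnit (a b c d : Rˣ) (h : IsUnit (!![(a:R),b;c,d])) :
    IsUnit ((d:R)*↑b⁻¹ - ↑c*↑a⁻¹) := by
  have hE1 : IsUnit (!![(1:R),0; -(↑c*↑a⁻¹),1]) := by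
    refine ⟨⟨!![(1:R),0; -(↑c*↑a⁻¹),1], !![(1:R),0; ↑c*↑a⁻¹,1], ?_, ?_⟩, rfl⟩ <;>
    · ext i j; fin_cases i <;> fin_cases j <;>
        simp [Matrix.mul_apply, Fin.sum_univ_two, Matrix.one_apply]
  have hE2 : IsUnit (!![(↑a⁻¹:R),0;0,1]) := by
    refine ⟨⟨!![(↑a⁻¹:R),0;0,1], !![(a:R),0;0,1], ?_, ?_⟩, rfl⟩ <;>
    · ext i j; fin_cases i <;> fin_cases j <;>
        simp [Matrix.mul_apply, Fin.sum_univ_two, Matrix.one_apply]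
  have hE3 : IsUnit (!![(1:R), -(↑a⁻¹*↑b);0,1]) := by
    refine ⟨⟨!![(1:R), -(↑a⁻¹*↑b);0,1], !![(1:R), ↑a⁻¹*↑b;0,1], ?_, ?_⟩, rfl⟩ <;>
    · ext i j; fin_cases i <;> fin_cases j <;>
        simp [Matrix.mul_apply, Fin.sum_univ_two, Matrix.one_apply]
  have hfac : !![(↑a⁻¹:R),0;0,1] * (!![(1:R),0; -(↑c*↑a⁻¹),1] * !![(a:R),b;c,d])
      * !![(1:R), -(↑a⁻¹*↑b);0,1] = !![(1:R), 0; 0, ↑d - ↑c*↑a⁻¹*↑b] := by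
    simp only [Matrix.mul_fin_two]
    simp [mul_sub, sub_mul, mul_neg, neg_mul, mul_assoc, Units.mul_inv_cancel_left,
      Units.inv_mul_cancel_left, Units.mul_inv, Units.inv_mul, neg_add_eq_sub]
  have hD : IsUnit (!![(1:R), 0; 0, ↑d - ↑c*↑a⁻¹*↑b]) := by
    rw [← hfac]; exact (hE2.mul (hE1.mul h)).mul hE3
  obtain ⟨V, hV⟩ := hD
  have h1 : (↑d - ↑c*↑a⁻¹*↑b) * ((V⁻¹).val 1 1) = 1 := by
    have hm := V.mul_inv
    rw [hV] at hm
    have h := Matrix.ext_iff.mpr hm 1 1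
    rw [Matrix.mul_apply, Fin.sum_univ_two] at h
    simp only [Matrix.of_apply, Matrix.cons_val', Matrix.cons_val_zero, Matrix.cons_val_one,
      Matrix.head_cons, Matrix.head_fin_const, Matrix.empty_val', Matrix.cons_val_fin_one,
      Matrix.one_apply_eq, zero_mul, zero_add] at h
    exact h
  have h2 : ((V⁻¹).val 1 1) * (↑d - ↑c*↑a⁻¹*↑b) = 1 := by
    have hm := V.inv_mul
    rw [hV] at hm
    have h := Matrix.ext_iff.mpr hm 1 1
    rw [Matrix.mul_apply, Fin.sum_univ_two] at h
    simp only [Matrix.of_apply, Matrix.cons_val', Matrix.cons_val_zero, Matrix.cons_val_one,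
      Matrix.head_cons, Matrix.head_fin_const, Matrix.empty_val', Matrix.cons_val_fin_one,
      Matrix.one_apply_eq, mul_zero, zero_add, mul_one] at h
    exact h
  have hs : IsUnit (↑d - ↑c*↑a⁻¹*↑b : R) := ⟨⟨_, _, h1, h2⟩, rfl⟩
  have := hs.mul b⁻¹.isUnit
  have he : (↑d - ↑c*↑a⁻¹*↑b) * ↑b⁻¹ = (↑d*↑b⁻¹ - ↑c*↑a⁻¹ : R) := by
    rw [sub_mul, Units.mul_inv_cancel_right]
  rwa [he] at this

lemma crit (a b c d : Rˣ) :
    IsUnit (!![(a:R),b;c,d]) ↔ IsUnit ((d:R)*↑b⁻¹ - ↑c*↑a⁻¹) := by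
  refine ⟨isUnit_u_of_isUnit a b c d, fun h => ?_⟩
  exact isUnit_key (u := h.unit) h.unit_spec

lemma entry_unit_lift {M : Matrix (Fin 2) (Fin 2) R} (he : ∀ j k, IsUnit (M j k)) :
    ∃ a b c d : Rˣ, M = !![(a:R),b;c,d] := by
  obtain ⟨a, ha⟩ := he 0 0
  obtain ⟨b, hb⟩ := he 0 1
  obtain ⟨c, hc⟩ := he 1 0
  obtain ⟨d, hd⟩ := he 1 1
  exact ⟨a, b, c, d, by rw [Matrix.eta_fin_two M, ha, hb, hc, hd]⟩

lemma entries_key {a b c d : Rˣ} : ∀ j k, IsUnit ((!![(a:R),b;c,d] : Matrix (Fin 2) (Fin 2) R) j k) := by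
  intro j k
  fin_cases j <;> fin_cases k <;>
    simp only [Matrix.of_apply, Matrix.cons_val', Matrix.cons_val_zero, Matrix.cons_val_one,
      Matrix.head_cons, Matrix.head_fin_const, Matrix.empty_val', Matrix.cons_val_fin_one,
      Fin.zero_eta, Fin.mk_one] <;> exact Units.isUnit _

lemma entries_Ninv (a b c d u : Rˣ) :
    ∀ j k, IsUnit ((Ninv a b c d u : Matrix (Fin 2) (Fin 2) R) j k) := by
  intro j k
  fin_cases j <;> fin_cases k <;>
    simp only [Ninv, Matrix.of_apply, Matrix.cons_val', Matrix.cons_val_zero, Matrix.cons_val_one,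
      Matrix.head_cons, Matrix.head_fin_const, Matrix.empty_val', Matrix.cons_val_fin_one,
      Fin.zero_eta, Fin.mk_one] <;>
    first
      | exact Units.isUnit _
      | exact (Units.isUnit _).neg

/-- main characterization : `dom(J) = M₂* ∩ M₂⋆`. -/
lemma domJ_iff_entries (M : Matrix (Fin 2) (Fin 2) R) :
    domJ M ↔ IsUnit M ∧ ∀ j k, IsUnit (M j k) := by
  constructor
  · rintro ⟨hM, hinv⟩
    refine ⟨hM, ?_⟩
    obtain ⟨a, b, c, d, hNe⟩ := entry_unit_lift hinv
    have hNU : IsUnit (Ring.inverse M) := isUnit_ringInverse.mpr hM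
    have hu := isUnit_u_of_isUnit a b c d (hNe ▸ hNU)
    have hMM : Ring.inverse (Ring.inverse M) = M := by
      obtain ⟨U, rfl⟩ := hM
      rw [Ring.inverse_unit, Ring.inverse_unit, inv_inv]
    intro j k
    rw [← hMM, hNe, ringInverse_key (u := hu.unit) hu.unit_spec]
    exact entries_Ninv a b c d hu.unit j k
  · rintro ⟨hM, he⟩
    refine ⟨hM, ?_⟩
    obtain ⟨a, b, c, d, hMe⟩ := entry_unit_lift he
    have hu := isUnit_u_of_isUnit a b c d (hMe ▸ hM)
    intro j k
    rw [hMe, ringInverse_key (u := hu.unit) hu.unit_spec]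
    exact entries_Ninv a b c d hu.unit j k

lemma J2_fin_two (a b c d : Rˣ) :
    J2 (!![(a:R),b;c,d]) = !![((a⁻¹:Rˣ):R),↑c⁻¹;↑b⁻¹,↑d⁻¹] := by
  ext j k
  fin_cases j <;> fin_cases k <;>
    simp [J2, Ring.inverse_unit]

lemma isUnit_J2_iff (a b c d : Rˣ) :
    IsUnit (J2 (!![(a:R),b;c,d])) ↔ IsUnit ((d:R)*↑b⁻¹ - ↑c*↑a⁻¹) := by
  rw [J2_fin_two, crit a⁻¹ c⁻¹ b⁻¹ d⁻¹]
  have hkey : ((d⁻¹:Rˣ):R)*↑(c⁻¹)⁻¹ - ↑b⁻¹*↑(a⁻¹)⁻¹ =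
      -((↑d⁻¹:R) * ((d:R)*↑b⁻¹ - ↑c*↑a⁻¹) * ↑a) := by
    simp only [inv_inv, mul_sub, sub_mul, mul_assoc, Units.inv_mul_cancel_left, neg_sub,
      Units.inv_mul_cancel_right, Units.inv_mul, mul_one]
  rw [hkey, IsUnit.neg_iff]
  rw [show ((↑d⁻¹:R) * ((d:R)*↑b⁻¹ - ↑c*↑a⁻¹) * ↑a) = (↑d⁻¹:R) * (((d:R)*↑b⁻¹ - ↑c*↑a⁻¹) * ↑a) from mul_assoc _ _ _]
  rw [Units.isUnit_units_mul, Units.isUnit_mul_units]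

lemma domJ_iff_domJinv (M : Matrix (Fin 2) (Fin 2) R) : domJ M ↔ domJinv M := by
  rw [domJ_iff_entries, domJinv]
  constructor
  · rintro ⟨hM, he⟩
    refine ⟨he, ?_⟩
    obtain ⟨a, b, c, d, hMe⟩ := entry_unit_lift he
    have hu := isUnit_u_of_isUnit a b c d (hMe ▸ hM)
    rw [hMe, isUnit_J2_iff]
    exact hu
  · rintro ⟨he, hJ⟩
    refine ⟨?_, he⟩
    obtain ⟨a, b, c, d, hMe⟩ := entry_unit_lift he
    rw [hMe] at hJ ⊢
    rw [crit]
    exact (isUnit_J2_iff a b c d).mp hJ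


lemma ringInverse_neg_unit (x : Rˣ) : Ring.inverse (-(x:R)) = -↑x⁻¹ := by
  rw [← Units.val_neg, Ring.inverse_unit, inv_neg, Units.val_neg]

lemma ringInverse_ringInverse {M₀ : Type*} [MonoidWithZero M₀] {a : M₀} (h : IsUnit a) :
    Ring.inverse (Ring.inverse a) = a := by
  obtain ⟨U, rfl⟩ := h
  rw [Ring.inverse_unit, Ring.inverse_unit, inv_inv]

lemma J2_Ninv (a b c d u : Rˣ) :
    J2 (Ninv a b c d u : Matrix (Fin 2) (Fin 2) R) =
      !![(↑((a⁻¹*u⁻¹*d*b⁻¹)⁻¹):R), -↑((b⁻¹*u⁻¹*c*a⁻¹)⁻¹);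
         -↑((a⁻¹*u⁻¹)⁻¹), ↑((b⁻¹*u⁻¹)⁻¹)] := by
  ext j k
  fin_cases j <;> fin_cases k <;>
    simp only [J2, Ninv, Matrix.of_apply, Matrix.cons_val', Matrix.cons_val_zero,
      Matrix.cons_val_one, Matrix.head_cons, Matrix.head_fin_const, Matrix.empty_val',
      Matrix.cons_val_fin_one, Fin.zero_eta, Fin.mk_one, Fin.isValue,
      Ring.inverse_unit, ringInverse_neg_unit]

lemma Jmap_key {a b c d u : Rˣ} (hu : (u:R) = ↑d*↑b⁻¹ - ↑c*↑a⁻¹) :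
    Jmap (!![(a:R),b;c,d]) =
      !![(↑((a⁻¹*u⁻¹*d*b⁻¹)⁻¹):R), -↑((b⁻¹*u⁻¹*c*a⁻¹)⁻¹);
         -↑((a⁻¹*u⁻¹)⁻¹), ↑((b⁻¹*u⁻¹)⁻¹)] := by
  rw [Jmap, ringInverse_key hu, J2_Ninv]

lemma J2_J2 (M : Matrix (Fin 2) (Fin 2) R) (h : ∀ j k, IsUnit (M j k)) : J2 (J2 M) = M := by
  ext j k
  simp only [J2, Matrix.of_apply]
  exact ringInverse_ringInverse (h j k)

lemma leftInv (M : Matrix (Fin 2) (Fin 2) R) (h : domJ M) : JinvMap (Jmap M) = M := by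
  rw [JinvMap, Jmap, J2_J2 _ h.2, ringInverse_ringInverse h.1]

lemma domJ_ringInverse (M : Matrix (Fin 2) (Fin 2) R) (h : domJ M) :
    domJ (Ring.inverse M) := by
  refine ⟨isUnit_ringInverse.mpr h.1, ?_⟩
  rw [ringInverse_ringInverse h.1]
  exact ((domJ_iff_entries M).mp h).2

lemma entries_J2 (M : Matrix (Fin 2) (Fin 2) R) (h : ∀ j k, IsUnit (M j k)) :
    ∀ j k, IsUnit (J2 M j k) := by
  intro j k
  simp only [J2, Matrix.of_apply]
  exact isUnit_ringInverse.mpr (h k j)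

lemma mapsTo_domJ (M : Matrix (Fin 2) (Fin 2) R) (h : domJ M) : domJ (Jmap M) := by
  have hN : domJ (Ring.inverse M) := domJ_ringInverse M h
  have hJ2 : IsUnit (J2 (Ring.inverse M)) := ((domJ_iff_domJinv _).mp hN).2
  have hent : ∀ j k, IsUnit (J2 (Ring.inverse M) j k) := entries_J2 _ h.2
  exact (domJ_iff_entries _).mpr ⟨hJ2, hent⟩

lemma domJ_JinvMap (N : Matrix (Fin 2) (Fin 2) R) (h : domJ N) : domJ (JinvMap N) := by
  obtain ⟨he, hJ2⟩ := (domJ_iff_domJinv N).mp h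
  refine ⟨isUnit_ringInverse.mpr hJ2, ?_⟩
  rw [JinvMap, ringInverse_ringInverse hJ2]
  exact entries_J2 N he

lemma rightInv (N : Matrix (Fin 2) (Fin 2) R) (h : domJ N) : Jmap (JinvMap N) = N := by
  obtain ⟨he, hJ2⟩ := (domJ_iff_domJinv N).mp h
  rw [Jmap, JinvMap, ringInverse_ringInverse hJ2, J2_J2 N he]

lemma Jmap_formula_key {a b c d u : Rˣ} (hu : (u:R) = ↑d*↑b⁻¹ - ↑c*↑a⁻¹) :
    Jmap (!![(a:R),b;c,d]) =
      !![(a:R) - ↑b*↑d⁻¹*↑c, (b:R) - ↑a*↑c⁻¹*↑d; (c:R) - ↑d*↑b⁻¹*↑a, (d:R) - ↑c*↑a⁻¹*↑b] := by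
  rw [Jmap_key hu]
  ext j k
  fin_cases j <;> fin_cases k <;>
  · simp only [Matrix.of_apply, Matrix.cons_val', Matrix.cons_val_zero, Matrix.cons_val_one,
      Matrix.head_cons, Matrix.head_fin_const, Matrix.empty_val', Matrix.cons_val_fin_one,
      Fin.zero_eta, Fin.mk_one, Fin.isValue]
    simp only [_root_.mul_inv_rev, inv_inv, Units.val_mul, hu]
    simp only [mul_sub, sub_mul, mul_neg, neg_mul, neg_neg, neg_sub, mul_assoc,
      Units.inv_mul_cancel_left, Units.mul_inv_cancel_left,
      Units.mul_inv, Units.inv_mul, mul_one, one_mul]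

lemma simRel_key {a b c d u : Rˣ} (hu : (u:R) = ↑d*↑b⁻¹ - ↑c*↑a⁻¹) :
    simRel (Jmap (!![(a:R),b;c,d])) (JinvMap (!![(a:R),b;c,d])) := by
  have hu2 : ((-(d⁻¹*u*a) : Rˣ) : R) = ↑d⁻¹*↑(c⁻¹)⁻¹ - ↑b⁻¹*↑(a⁻¹)⁻¹ := by
    simp only [Units.val_neg, Units.val_mul, inv_inv, hu]
    simp only [mul_sub, sub_mul, mul_assoc, Units.inv_mul_cancel_left, Units.mul_inv_cancel_left,
      Units.mul_inv, Units.inv_mul, mul_one, one_mul, neg_sub]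
  have hY : JinvMap (!![(a:R),b;c,d]) = Ninv a⁻¹ c⁻¹ b⁻¹ d⁻¹ (-(d⁻¹*u*a)) := by
    rw [JinvMap, J2_fin_two, ringInverse_key hu2]
  have hK : c*a⁻¹*b*d⁻¹*u*a*c⁻¹ = u*(b*d⁻¹) := by
    apply Units.ext
    simp only [Units.val_mul, hu]
    simp only [mul_sub, sub_mul, mul_assoc, Units.inv_mul_cancel_left, Units.mul_inv_cancel_left,
      Units.mul_inv, Units.inv_mul, mul_one, one_mul]
  have hK2 : b*d⁻¹*u*a*c⁻¹ = a*c⁻¹*(u*(b*d⁻¹)) := by rw [← hK]; group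
  refine ⟨![-(b*d⁻¹*u*a*c⁻¹*u), -(u*b*d⁻¹*u*a*c⁻¹)], ![1,1], ?_⟩
  rw [Jmap_key hu, hY]
  ext j k
  fin_cases j <;> fin_cases k <;>
  · simp only [Matrix.mul_diagonal, Matrix.diagonal_mul, Ninv, Matrix.of_apply, Matrix.cons_val',
      Matrix.cons_val_zero, Matrix.cons_val_one, Matrix.head_cons, Matrix.head_fin_const,
      Matrix.empty_val', Matrix.cons_val_fin_one, Fin.zero_eta, Fin.mk_one, Fin.isValue,
      Units.val_one, mul_one, one_mul]
    simp only [inv_neg, mul_neg, neg_mul, neg_neg, inv_inv, Units.val_neg,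
      mul_one, one_mul]
    rw [← Units.val_mul]
    try rw [neg_inj]
    congr 1
    first
      | (group; done)
      | (rw [hK2]; group)

lemma simRel_final (M : Matrix (Fin 2) (Fin 2) R) (h : domJ M) :
    simRel (Jmap M) (JinvMap M) := by
  obtain ⟨hM, he⟩ := (domJ_iff_entries M).mp h
  obtain ⟨a, b, c, d, hMe⟩ := entry_unit_lift he
  subst hMe
  have hu := (crit a b c d).mp hM
  exact simRel_key (u := hu.unit) hu.unit_spec

lemma entry00 {a b c d : R} (he : ∀ j k, IsUnit ((!![a,b;c,d] : Matrix (Fin 2) (Fin 2) R) j k)) :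
    IsUnit a ∧ IsUnit b ∧ IsUnit c ∧ IsUnit d :=
  ⟨by simpa using he 0 0, by simpa using he 0 1, by simpa using he 1 0, by simpa using he 1 1⟩

lemma part3 (a b c d : R) :
    domJ (!![a, b; c, d] : Matrix (Fin 2) (Fin 2) R) ↔
      (IsUnit a ∧ IsUnit b ∧ IsUnit c ∧ IsUnit d ∧
        IsUnit (d * Ring.inverse b - c * Ring.inverse a)) := by
  rw [domJ_iff_entries]
  constructor
  · rintro ⟨hM, he⟩
    obtain ⟨ha, hb, hc, hd⟩ := entry00 he
    refine ⟨ha, hb, hc, hd, ?_⟩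
    obtain ⟨A, rfl⟩ := ha
    obtain ⟨B, rfl⟩ := hb
    obtain ⟨C, rfl⟩ := hc
    obtain ⟨D, rfl⟩ := hd
    rw [Ring.inverse_unit, Ring.inverse_unit]
    exact (crit A B C D).mp hM
  · rintro ⟨ha, hb, hc, hd, hu⟩
    obtain ⟨A, rfl⟩ := ha
    obtain ⟨B, rfl⟩ := hb
    obtain ⟨C, rfl⟩ := hc
    obtain ⟨D, rfl⟩ := hd
    rw [Ring.inverse_unit, Ring.inverse_unit] at hu
    exact ⟨(crit A B C D).mpr hu, entries_key⟩

lemma part5 (a b c d : R) (h : domJ (!![a, b; c, d] : Matrix (Fin 2) (Fin 2) R)) :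
    Jmap (!![a, b; c, d] : Matrix (Fin 2) (Fin 2) R) =
      !![a - b * Ring.inverse d * c, b - a * Ring.inverse c * d;
         c - d * Ring.inverse b * a, d - c * Ring.inverse a * b] := by
  obtain ⟨hM, he⟩ := (domJ_iff_entries _).mp h
  obtain ⟨ha, hb, hc, hd⟩ := entry00 he
  obtain ⟨A, rfl⟩ := ha
  obtain ⟨B, rfl⟩ := hb
  obtain ⟨C, rfl⟩ := hc
  obtain ⟨D, rfl⟩ := hd
  have hu := (crit A B C D).mp hM
  rw [Ring.inverse_unit, Ring.inverse_unit, Ring.inverse_unit, Ring.inverse_unit]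
  exact Jmap_formula_key (u := hu.unit) hu.unit_spec

end Aux

/-- For `J` acting on `2×2` matrices:
`dom(J) = dom(J⁻¹) = M₂*(R) ∩ M₂⋆(R)`; `A = [[a,b],[c,d]]` belongs to this common
domain iff `a, b, c, d, db⁻¹ − ca⁻¹` are invertible; `J` maps `dom(J)` bijectively
onto itself and is given by the displayed formula; finally `J(A) ∼ J⁻¹(A)` and
`J²(A) ∼ A` for every `A ∈ dom(J)`. -/
theorem two_by_two_J {R : Type*} [Ring R] :
    (∀ M : Matrix (Fin 2) (Fin 2) R, domJ M ↔ domJinv M) ∧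
    (∀ M : Matrix (Fin 2) (Fin 2) R, domJ M ↔ (IsUnit M ∧ ∀ j k, IsUnit (M j k))) ∧
    (∀ a b c d : R,
      domJ (!![a, b; c, d] : Matrix (Fin 2) (Fin 2) R) ↔
        (IsUnit a ∧ IsUnit b ∧ IsUnit c ∧ IsUnit d ∧
          IsUnit (d * Ring.inverse b - c * Ring.inverse a))) ∧
    Set.BijOn Jmap {M : Matrix (Fin 2) (Fin 2) R | domJ M} {M | domJ M} ∧
    (∀ a b c d : R, domJ (!![a, b; c, d] : Matrix (Fin 2) (Fin 2) R) →
      Jmap (!![a, b; c, d] : Matrix (Fin 2) (Fin 2) R) =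
        !![a - b * Ring.inverse d * c, b - a * Ring.inverse c * d;
           c - d * Ring.inverse b * a, d - c * Ring.inverse a * b]) ∧
    (∀ M : Matrix (Fin 2) (Fin 2) R, domJ M → simRel (Jmap M) (JinvMap M)) ∧
    (∀ M : Matrix (Fin 2) (Fin 2) R, domJ M → simRel (Jmap (Jmap M)) M) := by
  refine ⟨domJ_iff_domJinv, domJ_iff_entries, part3, ?_, part5, simRel_final, ?_⟩
  · exact ⟨fun M hM => mapsTo_domJ M hM,
      fun M1 h1 M2 h2 heq => by rw [← leftInv M1 h1, heq, leftInv M2 h2],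
      fun N hN => ⟨JinvMap N, domJ_JinvMap N hN, rightInv N hN⟩⟩
  · intro M h
    have h6 := simRel_final (Jmap M) (mapsTo_domJ M h)
    rwa [leftInv M h] at h6
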